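/- For all vectors x, y in R^n and 1 < p < 2, there exists a constant c_p > 0 such that ⟨|x|^{p-2}x - |y|^{p-2}y, x - y⟩ ≥ c_p |x - y|^2 (|x| + |y|)^{p-2} whenever (x,y) ≠ (0,0). -/

import Mathlib

open Real

/-- Bernoulli-type tangent line bound for concave power: `b^s ≤ a^s + s a^{s-1}(b-a)`. -/
lemma plap_aux_bern {s a b : ℝ} (hs0 : 0 < s) (hs1 : s ≤ 1) (ha : 0 < a) (hb : 0 ≤ b) :
    b ^ s ≤ a ^ s + s * a ^ (s - 1) * (b - a) := by
  have h := Real.geom_mean_le_arith_mean2_weighted hs0.le (by linarith : (0:ℝ) ≤ 1 - s)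
    (div_nonneg hb ha.le) zero_le_one (by ring)
  have h1 : (b / a) ^ s * (1:ℝ) ^ (1 - s) = b ^ s / a ^ s := by
    rw [Real.one_rpow, mul_one, Real.div_rpow hb ha.le]
  rw [h1, mul_one] at h
  have has : 0 < a ^ s := Real.rpow_pos_of_pos ha s
  rw [div_le_iff₀ has] at h
  calc b ^ s ≤ (s * (b / a) + (1 - s)) * a ^ s := h
    _ = a ^ s + s * (a ^ s / a) * (b - a) := by field_simp; ring
    _ = a ^ s + s * a ^ (s - 1) * (b - a) := by
        rw [← Real.rpow_sub_one ha.ne' s]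

/-- key scalar inequality. -/
lemma plap_aux_scalar {p a b : ℝ} (hp1 : 1 < p) (hp2 : p < 2) (hb : 0 ≤ b) (hba : b ≤ a)
    (ha : 0 < a) :
    (p - 1) * (a + b) ^ (p - 2) * (a - b) ≤ a ^ (p - 1) - b ^ (p - 1) := by
  have h := plap_aux_bern (s := p - 1) (a := a) (b := b) (by linarith) (by linarith) ha hb
  have h2 : (a + b) ^ (p - 2) ≤ a ^ (p - 2) :=
    Real.rpow_le_rpow_of_nonpos ha (by linarith) (by linarith)
  have h3 : p - 1 - 1 = p - 2 := by ring
  rw [h3] at h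
  nlinarith [mul_nonneg (mul_nonneg (by linarith : (0:ℝ) ≤ p - 1)
    (sub_nonneg.2 h2)) (sub_nonneg.2 hba)]

lemma plap_key (n : ℕ) (p : ℝ) (hp1 : 1 < p) (hp2 : p < 2)
    (x y : EuclideanSpace ℝ (Fin n)) (hba : ‖y‖ ≤ ‖x‖) (hx : x ≠ 0) :
    (p - 1) / 2 * ‖x - y‖ ^ 2 * (‖x‖ + ‖y‖) ^ (p - 2) ≤
      (inner ℝ (‖x‖ ^ (p - 2) • x - ‖y‖ ^ (p - 2) • y) (x - y) : ℝ) := by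
  set a := ‖x‖ with hae
  set b := ‖y‖ with hbe
  have ha : 0 < a := norm_pos_iff.2 hx
  have hb : 0 ≤ b := norm_nonneg y
  set A := a ^ (p - 2) with hA
  set B := b ^ (p - 2) with hB
  set S := (a + b) ^ (p - 2) with hS
  have hexp : (inner ℝ (A • x - B • y) (x - y) : ℝ)
      = A * a ^ 2 + B * b ^ 2 - (A + B) * (inner ℝ x y : ℝ) := by
    simp only [inner_sub_left, inner_sub_right, real_inner_smul_left,
      real_inner_self_eq_norm_sq, real_inner_comm y x]
    ring
  have hd : ‖x - y‖ ^ 2 = a ^ 2 + b ^ 2 - 2 * (inner ℝ x y : ℝ) := by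
    rw [norm_sub_sq_real]; ring
  set s := (inner ℝ x y : ℝ) with hs
  rw [hexp, hd]
  -- basic facts
  have hS0 : 0 ≤ S := Real.rpow_nonneg (by linarith) _
  have hB0 : 0 ≤ B := Real.rpow_nonneg hb _
  have hSA : S ≤ A := Real.rpow_le_rpow_of_nonpos ha (by linarith) (by linarith)
  have hsab : s ≤ a * b := real_inner_le_norm x y
  have hAa : A * a = a ^ (p - 1) := by
    rw [hA, ← Real.rpow_add_one ha.ne', show p - 2 + 1 = p - 1 from by ring]
  have hBb : B * b = b ^ (p - 1) := by
    rcases eq_or_lt_of_le hb with h | h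
    · rw [hB, ← h, Real.zero_rpow (by linarith : p - 2 ≠ 0),
        Real.zero_rpow (by intro h'; linarith [h'] : p - 1 ≠ 0)]
      ring
    · rw [hB, ← Real.rpow_add_one h.ne', show p - 2 + 1 = p - 1 from by ring]
  have hkey : (p - 1) * S * (a - b) ≤ A * a - B * b := by
    rw [hAa, hBb]
    exact plap_aux_scalar hp1 hp2 hb hba ha
  nlinarith [mul_nonneg (mul_nonneg hS0 (by linarith : (0:ℝ) ≤ 2 - p)) (sub_nonneg.2 hsab),
    mul_nonneg (sub_nonneg.2 hSA) (sub_nonneg.2 hsab),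
    mul_nonneg hB0 (sub_nonneg.2 hsab),
    mul_nonneg (mul_nonneg (by linarith : (0:ℝ) ≤ p - 1) hS0)
      (mul_self_nonneg (a - b)),
    mul_nonneg (sub_nonneg.2 hkey) (sub_nonneg.2 hba)]

theorem plap_monotone_p_lt_two (n : ℕ) (p : ℝ) (hp1 : 1 < p) (hp2 : p < 2) :
    ∃ c : ℝ, 0 < c ∧ ∀ x y : EuclideanSpace ℝ (Fin n), ¬ (x = 0 ∧ y = 0) →
      c * ‖x - y‖ ^ 2 * (‖x‖ + ‖y‖) ^ (p - 2) ≤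
        (inner ℝ (‖x‖ ^ (p - 2) • x - ‖y‖ ^ (p - 2) • y) (x - y) : ℝ) := by
  refine ⟨(p - 1) / 2, by linarith, fun x y hxy => ?_⟩
  rcases le_total ‖y‖ ‖x‖ with h | h
  · have hx : x ≠ 0 := by
      intro hx0
      apply hxy
      refine ⟨hx0, ?_⟩
      rw [← norm_eq_zero]
      have : ‖x‖ = 0 := by rw [hx0, norm_zero]
      linarith [norm_nonneg y]
    exact plap_key n p hp1 hp2 x y h hx
  · have hy : y ≠ 0 := by
      intro hy0
      apply hxy
      constructor
      · rw [← norm_eq_zero]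
        have : ‖y‖ = 0 := by rw [hy0, norm_zero]
        linarith [norm_nonneg x]
      · exact hy0
    have key := plap_key n p hp1 hp2 y x h hy
    have h1 : ‖y - x‖ = ‖x - y‖ := norm_sub_rev y x
    have h2 : (inner ℝ (‖y‖ ^ (p - 2) • y - ‖x‖ ^ (p - 2) • x) (y - x) : ℝ) =
        (inner ℝ (‖x‖ ^ (p - 2) • x - ‖y‖ ^ (p - 2) • y) (x - y) : ℝ) := by
      rw [show ‖y‖ ^ (p-2) • y - ‖x‖ ^ (p-2) • x = -(‖x‖ ^ (p-2) • x - ‖y‖ ^ (p-2) • y) by abel,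
        show y - x = -(x - y) by abel, inner_neg_neg]
    rw [h1, h2, add_comm ‖y‖ ‖x‖] at key
    exact key
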